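/- Let n, m be unit vectors in R^3 with n·m > 0 and set B = (I - n n^T)(I - m m^T) + n m^T. Then B is invertible, B maps the orthogonal complement of m onto the orthogonal complement of n, and B maps the span of m onto the span of n. -/

import Mathlib

open Matrix

lemma vmv_mul (a b c d : Fin 3 → ℝ) :
    vecMulVec a b * vecMulVec c d = (b ⬝ᵥ c) • vecMulVec a d := by
  ext i j
  simp [Matrix.mul_apply, Matrix.vecMulVec_apply, dotProduct, Fin.sum_univ_three]
  ring

lemma vmv_mulVec (a b x : Fin 3 → ℝ) :
    (vecMulVec a b).mulVec x = (b ⬝ᵥ x) • a := by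
  ext i
  simp [Matrix.mulVec, Matrix.vecMulVec_apply, dotProduct, Fin.sum_univ_three]
  ring

/-- For unit vectors `n, m ∈ ℝ³` with `n·m > 0`, the matrix
`B = (I - n nᵀ)(I - m mᵀ) + n mᵀ` is invertible, maps the orthogonal complement of `m`
onto the orthogonal complement of `n`, and maps the span of `m` onto the span of `n`. -/
theorem stmt3 (n m : Fin 3 → ℝ)
    (hn : n ⬝ᵥ n = 1) (hm : m ⬝ᵥ m = 1) (hnm : 0 < n ⬝ᵥ m)
    (B : Matrix (Fin 3) (Fin 3) ℝ)
    (hB : B = (1 - vecMulVec n n) * (1 - vecMulVec m m) + vecMulVec n m) :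
    IsUnit B ∧
      B.mulVec '' {x | m ⬝ᵥ x = 0} = {x | n ⬝ᵥ x = 0} ∧
      B.mulVec '' {x | ∃ t : ℝ, x = t • m} = {x | ∃ t : ℝ, x = t • n} := by
  obtain ⟨c, hc'⟩ : ∃ c : ℝ, n ⬝ᵥ m = c := ⟨_, rfl⟩
  rw [hc'] at hnm
  have hc : c ≠ 0 := ne_of_gt hnm
  have hmn : m ⬝ᵥ n = c := by rw [dotProduct_comm, hc']
  -- expanded form of B
  have hBexp : B = 1 - vecMulVec n n - vecMulVec m m + (c + 1) • vecMulVec n m := by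
    have h1 : vecMulVec n n * vecMulVec m m = c • vecMulVec n m := by
      rw [vmv_mul, hc']
    rw [hB, sub_mul, mul_sub, mul_sub, one_mul, mul_one, h1, add_smul, one_smul]
    simp only [one_mul]
    abel
  -- explicit inverse
  set C : Matrix (Fin 3) (Fin 3) ℝ := 1 - c⁻¹ • vecMulVec n m + vecMulVec m n with hC
  have key : C * B = 1 := by
    rw [hC, hBexp]
    simp only [mul_sub, sub_mul, mul_add, add_mul, mul_one, one_mul,
      smul_mul_assoc, mul_smul_comm, vmv_mul, hn, hm, hmn, hc', smul_smul, one_smul]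
    match_scalars <;> field_simp <;> ring
  have hBC : B * C = 1 := mul_eq_one_comm.mp key
  have hUnit : IsUnit B := (Matrix.isUnit_iff_isUnit_det B).mpr (Matrix.isUnit_det_of_right_inverse hBC)
  -- action of B on vectors
  have hBv : ∀ x, B.mulVec x =
      x - (n ⬝ᵥ x) • n - (m ⬝ᵥ x) • m + ((c + 1) * (m ⬝ᵥ x)) • n := by
    intro x
    rw [hBexp]
    simp [Matrix.add_mulVec, Matrix.sub_mulVec, Matrix.smul_mulVec,
      vmv_mulVec, Matrix.one_mulVec, smul_smul]
  refine ⟨hUnit, ?_, ?_⟩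
  · ext y
    constructor
    · rintro ⟨x, hx, rfl⟩
      simp only [Set.mem_setOf_eq] at hx ⊢
      rw [hBv x, hx]
      simp [dotProduct_add, dotProduct_sub, dotProduct_smul, hn, smul_eq_mul]
    · intro hy
      simp only [Set.mem_setOf_eq] at hy
      refine ⟨y - (c⁻¹ * (m ⬝ᵥ y)) • n, ?_, ?_⟩
      · simp only [Set.mem_setOf_eq, dotProduct_sub, dotProduct_smul, hmn, smul_eq_mul]
        field_simp
        ring
      · rw [hBv]
        simp only [dotProduct_sub, dotProduct_smul, hn, hm, hmn, hc', hy, smul_eq_mul]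
        match_scalars <;> field_simp <;> ring
  · ext y
    constructor
    · rintro ⟨x, ⟨t, rfl⟩, rfl⟩
      refine ⟨t, ?_⟩
      rw [hBv]
      simp only [dotProduct_smul, hm, hmn, hc', smul_eq_mul, mul_one]
      match_scalars <;> ring
    · rintro ⟨t, rfl⟩
      refine ⟨t • m, ⟨t, rfl⟩, ?_⟩
      rw [hBv]
      simp only [dotProduct_smul, hm, hmn, hc', smul_eq_mul, mul_one]
      match_scalars <;> ring
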